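/- arXiv:1705.03649 — 3 statements merged into one kernel-verified Lean document; each statement's English description precedes it below -/
import Mathlib

section
/- Let H be a real Hilbert space with inner product a(·,·) and norm ‖·‖_a, V a finite-dimensional real vector space, E : V → H linear, s : V × V → ℝ a symmetric positive-semidefinite bilinear form satisfying s(w,v) ≤ C̃₀ s(w,w)^{1/2} s(v,v)^{1/2} for all w,v ∈ V with some constant C̃₀ ≥ 1. Suppose u ∈ H and u_h ∈ V satisfy a(u - E u_h, E v_h) = s(u_h, v_h) for all v_h ∈ V. Then ‖u - E u_h‖_a² + s(u_h,u_h) ≤ inf_{v_h ∈ V} ( ‖u - E v_h‖_a² + C̃₀² s(v_h,v_h) ). -/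
/-- Céa-type quasi-optimality bound for R-FEM. -/
theorem rfem_cea_quasi_optimality
    {H V : Type*} [NormedAddCommGroup H] [InnerProductSpace ℝ H] [CompleteSpace H]
    [AddCommGroup V] [Module ℝ V] [FiniteDimensional ℝ V]
    (E : V →ₗ[ℝ] H) (s : V →ₗ[ℝ] V →ₗ[ℝ] ℝ)
    (hssymm : ∀ w v : V, s w v = s v w)
    (hspos : ∀ v : V, 0 ≤ s v v)
    (C0 : ℝ) (hC0 : 1 ≤ C0)
    (hCS : ∀ w v : V, s w v ≤ C0 * Real.sqrt (s w w) * Real.sqrt (s v v))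
    (u : H) (uh : V)
    (horth : ∀ vh : V, (inner ℝ (u - E uh) (E vh) : ℝ) = s uh vh) :
    ∀ vh : V, ‖u - E uh‖ ^ 2 + s uh uh ≤ ‖u - E vh‖ ^ 2 + C0 ^ 2 * s vh vh := by
  intro vh
  set e := u - E uh with he
  have hsplit : (inner ℝ e e : ℝ) = inner ℝ e (u - E vh) + inner ℝ e (E (vh - uh)) := by
    rw [← inner_add_right]
    congr 1
    rw [map_sub]
    rw [he]; abel
  have hEpart : (inner ℝ e (E (vh - uh)) : ℝ) = s uh vh - s uh uh := by
    rw [horth, map_sub]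
  have key : ‖e‖ ^ 2 + s uh uh = inner ℝ e (u - E vh) + s uh vh := by
    rw [← real_inner_self_eq_norm_sq, hsplit, hEpart]; ring
  have h1 : (inner ℝ e (u - E vh) : ℝ) ≤ ‖e‖ * ‖u - E vh‖ := real_inner_le_norm _ _
  have h2 : s uh vh ≤ C0 * Real.sqrt (s uh uh) * Real.sqrt (s vh vh) := hCS uh vh
  have hy1 : ‖e‖ * ‖u - E vh‖ ≤ (1/2) * ‖e‖ ^ 2 + (1/2) * ‖u - E vh‖ ^ 2 := by
    nlinarith [sq_nonneg (‖e‖ - ‖u - E vh‖)]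
  have hy2 : C0 * Real.sqrt (s uh uh) * Real.sqrt (s vh vh)
      ≤ (1/2) * s uh uh + (1/2) * C0 ^ 2 * s vh vh := by
    have a2 : Real.sqrt (s uh uh) ^ 2 = s uh uh := Real.sq_sqrt (hspos uh)
    have b2 : Real.sqrt (s vh vh) ^ 2 = s vh vh := Real.sq_sqrt (hspos vh)
    nlinarith [sq_nonneg (Real.sqrt (s uh uh) - C0 * Real.sqrt (s vh vh))]
  nlinarith [key, h1, h2, hy1, hy2]
end

section
/- Let H be a real Hilbert space with inner product a, V a finite-dimensional real vector space, E : V → H linear, s : V × V → ℝ symmetric positive-semidefinite bilinear satisfying the Cauchy–Schwarz-type bound s(w,v) ≤ C̃₀ s(w,w)^{1/2} s(v,v)^{1/2}. Suppose u ∈ H, u_h ∈ V satisfy the orthogonality a(u − E u_h, E v) = s(u_h, v) for all v ∈ V, and suppose there exists v* ∈ V with E v* = P u, where P is the a-orthogonal projection of H onto the closed subspace E(V), and with s(v*, v*) ≤ δ². Then ‖u − E u_h‖_a² + s(u_h, u_h) ≤ dist_a(u, E(V))² + C̃₀² δ². -/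
/-- Refined quasi-optimality: if E v* realizes the a-orthogonal projection of u
onto E(V) and has small stabilisation, the R-FEM error is bounded by the
best-approximation error plus C̃₀²δ². -/
theorem rfem_refined_quasi_optimality
    {H V : Type*} [NormedAddCommGroup H] [InnerProductSpace ℝ H] [CompleteSpace H]
    [AddCommGroup V] [Module ℝ V] [FiniteDimensional ℝ V]
    (E : V →ₗ[ℝ] H) (s : V →ₗ[ℝ] V →ₗ[ℝ] ℝ)
    (hssymm : ∀ w v : V, s w v = s v w)
    (hspos : ∀ v : V, 0 ≤ s v v)
    (C0 : ℝ) (hC0 : 0 ≤ C0)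
    (hCS : ∀ w v : V, s w v ≤ C0 * Real.sqrt (s w w) * Real.sqrt (s v v))
    (u : H) (uh : V)
    (horth : ∀ v : V, (inner ℝ (u - E uh) (E v) : ℝ) = s uh v)
    (vstar : V) (δ : ℝ) (hδ : 0 ≤ δ)
    -- E v* is the a-orthogonal projection of u onto E(V):
    (hproj : ∀ v : V, (inner ℝ (u - E vstar) (E v) : ℝ) = 0)
    (hvstar : s vstar vstar ≤ δ ^ 2) :
    ‖u - E uh‖ ^ 2 + s uh uh
      ≤ (Metric.infDist u (LinearMap.range E : Set H)) ^ 2 + C0 ^ 2 * δ ^ 2 := by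
  -- key identity: ⟪E v* - E uh, E v⟫ = s uh v
  have hkey : ∀ v : V, (inner ℝ (E vstar - E uh) (E v) : ℝ) = s uh v := by
    intro v
    have h1 := horth v
    have h2 := hproj v
    have : (E vstar - E uh : H) = (u - E uh) - (u - E vstar) := by abel
    rw [this, inner_sub_left, h1, h2]; ring
  -- Pythagoras for any v
  have hpyth : ∀ v : V, ‖u - E v‖ ^ 2
      = ‖u - E vstar‖ ^ 2 + ‖E vstar - E v‖ ^ 2 := by
    intro v
    have hsplit : (u - E v : H) = (u - E vstar) + (E vstar - E v) := by abel
    have hz : (inner ℝ (u - E vstar) (E vstar - E v) : ℝ) = 0 := by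
      rw [show (E vstar - E v : H) = E (vstar - v) by rw [map_sub]]
      exact hproj _
    rw [hsplit, @norm_add_sq_real, hz]; ring
  -- best approximation
  have hne : (LinearMap.range E : Set H).Nonempty := ⟨E 0, ⟨0, rfl⟩⟩
  have hbest : ‖u - E vstar‖ ≤ Metric.infDist u (LinearMap.range E : Set H) := by
    by_contra hlt
    push_neg at hlt
    obtain ⟨y, ⟨v, rfl⟩, hy⟩ := (Metric.infDist_lt_iff hne).mp hlt
    have h := hpyth v
    have h1 : (0:ℝ) ≤ ‖E vstar - E v‖ ^ 2 := sq_nonneg _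
    have h2 : (0:ℝ) ≤ ‖u - E vstar‖ := norm_nonneg _
    have h3 : (0:ℝ) ≤ ‖u - E v‖ := norm_nonneg _
    rw [dist_eq_norm] at hy
    nlinarith
  have hbest2 : ‖u - E vstar‖ ^ 2
      ≤ (Metric.infDist u (LinearMap.range E : Set H)) ^ 2 :=
    pow_le_pow_left₀ (norm_nonneg _) hbest 2
  -- the stabilisation identity
  have hid : ‖E vstar - E uh‖ ^ 2 + s uh uh = s uh vstar := by
    have h1 : ‖E vstar - E uh‖ ^ 2 = (inner ℝ (E vstar - E uh) (E vstar - E uh) : ℝ) :=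
      (real_inner_self_eq_norm_sq _).symm
    have h2 := hkey (vstar - uh)
    rw [map_sub E, map_sub] at h2
    rw [h1]
    linarith
  -- bound s uh vstar
  have hsq : Real.sqrt (s vstar vstar) ≤ δ := by
    calc Real.sqrt (s vstar vstar) ≤ Real.sqrt (δ ^ 2) := Real.sqrt_le_sqrt hvstar
    _ = δ := by rw [Real.sqrt_sq hδ]
  set t := Real.sqrt (s uh uh) with ht
  have htnn : 0 ≤ t := Real.sqrt_nonneg _
  have ht2 : t ^ 2 = s uh uh := Real.sq_sqrt (hspos uh)
  have hcs : s uh vstar ≤ C0 * t * δ := by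
    calc s uh vstar ≤ C0 * t * Real.sqrt (s vstar vstar) := hCS uh vstar
    _ ≤ C0 * t * δ := by
        apply mul_le_mul_of_nonneg_left hsq (by positivity)
  have hle : s uh uh ≤ s uh vstar := by
    have := sq_nonneg ‖E vstar - E uh‖; linarith [hid]
  have hfin : s uh vstar ≤ C0 ^ 2 * δ ^ 2 := by
    nlinarith [sq_nonneg (C0 * δ - t)]
  have hp := hpyth uh
  linarith [hid, hp, hbest2]
end

section
/- Let n ≥ 1 and let G = (V, E) be the graph whose vertices are the interior lattice points of a triangulated square (regular criss-cross or right-triangle mesh of the unit square with n² subsquares each split into triangles). Define V_h^0 as the space of functions constant on each triangle and V_h^1 ∩ H^1_0 as the space of continuous piecewise-linear functions vanishing on the boundary, and let E_avg : V_h^0 → V_h^1 ∩ H^1_0 be the nodal averaging operator assigning to each interior vertex ν the average of the constant values on the triangles containing ν, and 0 at boundary vertices. Then E_avg is surjective. -/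
namespace CrissCross

/-- Vertices of the `n × n` right-triangle mesh of the unit square. -/
abbrev Vertex (n : ℕ) := Fin (n + 1) × Fin (n + 1)

/-- Triangles: each subsquare `(i,j)` is split into a lower (`false`) and an
upper (`true`) triangle. -/
abbrev Triangle (n : ℕ) := Fin n × Fin n × Bool

/-- The three vertices of a triangle. The lower triangle of square `(i,j)` has
vertices `(i,j), (i+1,j), (i+1,j+1)`; the upper one `(i,j), (i,j+1), (i+1,j+1)`. -/
def verts {n : ℕ} (T : Triangle n) : Finset (Vertex n) :=
  match T with
  | (i, j, false) => {(i.castSucc, j.castSucc), (i.succ, j.castSucc), (i.succ, j.succ)}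
  | (i, j, true) => {(i.castSucc, j.castSucc), (i.castSucc, j.succ), (i.succ, j.succ)}

/-- A vertex is interior if it lies strictly inside the square. -/
def Interior {n : ℕ} (v : Vertex n) : Prop :=
  v.1 ≠ 0 ∧ v.1 ≠ Fin.last n ∧ v.2 ≠ 0 ∧ v.2 ≠ Fin.last n

instance {n : ℕ} (v : Vertex n) : Decidable (Interior v) := by
  unfold Interior; infer_instance

/-- The nodal averaging recovery operator: at each interior vertex take the
average of the constant values over all triangles containing the vertex,
and `0` at boundary vertices. -/
noncomputable def Eavg {n : ℕ} (u : Triangle n → ℝ) (v : Vertex n) : ℝ :=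
  if Interior v then
    (∑ T ∈ Finset.univ.filter (fun T : Triangle n => v ∈ verts T), u T)
      / (Finset.univ.filter (fun T : Triangle n => v ∈ verts T)).card
  else 0

noncomputable def W (c : ℕ → ℕ → ℝ) (m : ℕ) (a b : ℕ) : ℝ :=
  if h : a < m ∧ b < m then
    c (a + 1) (b + 1) - W c m (a + 1) (b + 1) - W c m a (b + 1)
  else 0
termination_by m - b
decreasing_by all_goals omega

lemma W_eq (c : ℕ → ℕ → ℝ) (m a b : ℕ) (h : a < m ∧ b < m) :
    W c m a b = c (a + 1) (b + 1) - W c m (a + 1) (b + 1) - W c m a (b + 1) := by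
  rw [W]; exact dif_pos h

noncomputable def ufun (n : ℕ) (c : ℕ → ℕ → ℝ) : Triangle n → ℝ
  | (i, j, false) => W c (n - 1) i.val j.val
  | (_, _, true) => 0

@[simp] lemma ufun_false (n : ℕ) (c : ℕ → ℕ → ℝ) (i j : Fin n) :
    ufun n c (i, j, false) = W c (n - 1) i.val j.val := rfl

@[simp] lemma ufun_true (n : ℕ) (c : ℕ → ℕ → ℝ) (i j : Fin n) :
    ufun n c (i, j, true) = 0 := rfl


/-- Lemma 4.3 (structured mesh): the averaging recovery from piecewise constants
onto conforming piecewise linears vanishing on the boundary is surjective, i.e.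
every conforming function (identified with its nodal values, vanishing at
boundary vertices) is the recovery of some piecewise constant function. -/
theorem Eavg_surjective (n : ℕ) (hn : 1 ≤ n)
    (g : Vertex n → ℝ) (hg : ∀ v : Vertex n, ¬ Interior v → g v = 0) :
    ∃ u : Triangle n → ℝ, ∀ v : Vertex n, Eavg u v = g v := by
  classical
  set c : ℕ → ℕ → ℝ := fun p q =>
    if h : p ≤ n ∧ q ≤ n then 6 * g (⟨p, by omega⟩, ⟨q, by omega⟩) else 0 with hc
  refine ⟨ufun n c, ?_⟩
  rintro ⟨⟨p, hplt⟩, ⟨q, hqlt⟩⟩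
  by_cases hv : Interior ((⟨p, hplt⟩, ⟨q, hqlt⟩) : Vertex n)
  · obtain ⟨hp0, hpl, hq0, hql⟩ := hv
    have hp1 : 1 ≤ p := by
      rcases Nat.eq_zero_or_pos p with h | h
      · exact absurd (Fin.ext (by simp [h])) hp0
      · exact h
    have hq1 : 1 ≤ q := by
      rcases Nat.eq_zero_or_pos q with h | h
      · exact absurd (Fin.ext (by simp [h])) hq0
      · exact h
    have hpn : p ≤ n - 1 := by
      have : p ≠ n := fun h => hpl (Fin.ext (by simp [h, Fin.last]))
      omega
    have hqn : q ≤ n - 1 := by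
      have : q ≠ n := fun h => hql (Fin.ext (by simp [h, Fin.last]))
      omega
    have hpn' : p < n := by omega
    have hqn' : q < n := by omega
    have hset : Finset.univ.filter
          (fun T : Triangle n => ((⟨p, hplt⟩, ⟨q, hqlt⟩) : Vertex n) ∈ verts T) =
        ({(⟨p, hpn'⟩, ⟨q, hqn'⟩, false), (⟨p-1, by omega⟩, ⟨q, hqn'⟩, false),
          (⟨p-1, by omega⟩, ⟨q-1, by omega⟩, false),
          (⟨p, hpn'⟩, ⟨q, hqn'⟩, true), (⟨p, hpn'⟩, ⟨q-1, by omega⟩, true),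
          (⟨p-1, by omega⟩, ⟨q-1, by omega⟩, true)} : Finset (Triangle n)) := by
      ext ⟨i, j, s⟩
      have hi := i.isLt
      have hj := j.isLt
      simp only [Finset.mem_filter, Finset.mem_univ, true_and, Finset.mem_insert,
        Finset.mem_singleton]
      cases s <;>
        simp only [verts, Finset.mem_insert, Finset.mem_singleton, Prod.ext_iff,
          Fin.ext_iff, Fin.val_succ, Fin.coe_castSucc, Prod.mk.injEq, Fin.mk.injEq,
          Bool.false_eq_true, Bool.true_eq_false, and_true, and_false, or_false,
          false_or] <;> omega
    rw [Eavg, if_pos ⟨hp0, hpl, hq0, hql⟩, hset]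
    have hd1 : ((⟨p, hpn'⟩, ⟨q, hqn'⟩, false) : Triangle n) ∉
        ({(⟨p-1, by omega⟩, ⟨q, hqn'⟩, false), (⟨p-1, by omega⟩, ⟨q-1, by omega⟩, false),
          (⟨p, hpn'⟩, ⟨q, hqn'⟩, true), (⟨p, hpn'⟩, ⟨q-1, by omega⟩, true),
          (⟨p-1, by omega⟩, ⟨q-1, by omega⟩, true)} : Finset (Triangle n)) := by
      simp only [Finset.mem_insert, Finset.mem_singleton, Prod.mk.injEq, Fin.mk.injEq,
        Bool.false_eq_true, and_false, and_true, not_or, not_false_eq_true, true_and]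
      omega
    have hd2 : ((⟨p-1, by omega⟩, ⟨q, hqn'⟩, false) : Triangle n) ∉
        ({(⟨p-1, by omega⟩, ⟨q-1, by omega⟩, false),
          (⟨p, hpn'⟩, ⟨q, hqn'⟩, true), (⟨p, hpn'⟩, ⟨q-1, by omega⟩, true),
          (⟨p-1, by omega⟩, ⟨q-1, by omega⟩, true)} : Finset (Triangle n)) := by
      simp only [Finset.mem_insert, Finset.mem_singleton, Prod.mk.injEq, Fin.mk.injEq,
        Bool.false_eq_true, and_false, and_true, not_or, not_false_eq_true, true_and]
      omega
    have hd3 : ((⟨p-1, by omega⟩, ⟨q-1, by omega⟩, false) : Triangle n) ∉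
        ({(⟨p, hpn'⟩, ⟨q, hqn'⟩, true), (⟨p, hpn'⟩, ⟨q-1, by omega⟩, true),
          (⟨p-1, by omega⟩, ⟨q-1, by omega⟩, true)} : Finset (Triangle n)) := by
      simp only [Finset.mem_insert, Finset.mem_singleton, Prod.mk.injEq, Fin.mk.injEq,
        Bool.false_eq_true, and_false, and_true, not_or, not_false_eq_true, true_and]
    have hd4 : ((⟨p, hpn'⟩, ⟨q, hqn'⟩, true) : Triangle n) ∉
        ({(⟨p, hpn'⟩, ⟨q-1, by omega⟩, true),
          (⟨p-1, by omega⟩, ⟨q-1, by omega⟩, true)} : Finset (Triangle n)) := by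
      simp only [Finset.mem_insert, Finset.mem_singleton, Prod.mk.injEq, Fin.mk.injEq,
        and_true, not_or, not_false_eq_true, true_and]
      omega
    have hd5 : ((⟨p, hpn'⟩, ⟨q-1, by omega⟩, true) : Triangle n) ∉
        ({(⟨p-1, by omega⟩, ⟨q-1, by omega⟩, true)} : Finset (Triangle n)) := by
      simp only [Finset.mem_singleton, Prod.mk.injEq, Fin.mk.injEq, and_true, not_or, not_false_eq_true, true_and]
      omega
    rw [Finset.sum_insert hd1, Finset.sum_insert hd2, Finset.sum_insert hd3,
      Finset.sum_insert hd4, Finset.sum_insert hd5, Finset.sum_singleton,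
      Finset.card_insert_of_notMem hd1, Finset.card_insert_of_notMem hd2,
      Finset.card_insert_of_notMem hd3, Finset.card_insert_of_notMem hd4,
      Finset.card_insert_of_notMem hd5, Finset.card_singleton]
    simp only [ufun_false, ufun_true]
    have key : W c (n-1) p q + W c (n-1) (p-1) q + W c (n-1) (p-1) (q-1) = c p q := by
      rw [W_eq c (n-1) (p-1) (q-1) (by omega)]
      have e1 : p - 1 + 1 = p := by omega
      have e2 : q - 1 + 1 = q := by omega
      rw [e1, e2]; ring
    have hcv : c p q = 6 * g ((⟨p, hplt⟩, ⟨q, hqlt⟩) : Vertex n) := by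
      rw [hc]
      simp only [dif_pos (show p ≤ n ∧ q ≤ n by omega)]
    rw [show (((5:ℕ) + 1 : ℕ) : ℝ) = 6 by norm_num,
      div_eq_iff (by norm_num : (6:ℝ) ≠ 0)]
    linarith [key, hcv]
  · rw [Eavg, if_neg hv, hg _ hv]

end CrissCross
end
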